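/- If the Sum criterion holds at step k, i.e., α · ‖(A_{k,k}^(k))⁻¹‖₁⁻¹ ≥ Σ_{i>k} ‖A_{i,k}^(k)‖₁, then for each column j > k, Σ_{i>k} ‖A_{i,j}^(k+1)‖₁ ≤ Σ_{i>k} ‖A_{i,j}^(k)‖₁ + α ‖A_{k,j}^(k)‖₁. -/

import Mathlib

/-- The induced matrix 1-norm (maximum absolute column sum). -/
noncomputable def norm1 {ι κ : Type*} [Fintype ι] [Fintype κ] (M : Matrix ι κ ℝ) : ℝ :=
  ⨆ j, ∑ i, |M i j|

lemma norm1_nonneg {ι κ : Type*} [Fintype ι] [Fintype κ] (M : Matrix ι κ ℝ) :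
    0 ≤ norm1 M :=
  Real.iSup_nonneg fun j => Finset.sum_nonneg fun i _ => abs_nonneg _

lemma col_sum_le_norm1 {ι κ : Type*} [Fintype ι] [Fintype κ] (M : Matrix ι κ ℝ) (j : κ) :
    ∑ i, |M i j| ≤ norm1 M :=
  le_ciSup (Set.Finite.bddAbove (Set.finite_range (fun j => ∑ i, |M i j|))) j

lemma norm1_le {ι κ : Type*} [Fintype ι] [Fintype κ] (M : Matrix ι κ ℝ) (c : ℝ)
    (hc : 0 ≤ c) (h : ∀ j, ∑ i, |M i j| ≤ c) : norm1 M ≤ c :=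
  Real.iSup_le h hc

lemma norm1_sub_le {ι κ : Type*} [Fintype ι] [Fintype κ] (X Y : Matrix ι κ ℝ) :
    norm1 (X - Y) ≤ norm1 X + norm1 Y := by
  apply norm1_le
  · exact add_nonneg (norm1_nonneg X) (norm1_nonneg Y)
  · intro j
    calc ∑ i, |(X - Y) i j| ≤ ∑ i, (|X i j| + |Y i j|) := by
          apply Finset.sum_le_sum
          intro i _
          simpa [Matrix.sub_apply] using abs_sub (X i j) (Y i j)
      _ = (∑ i, |X i j|) + ∑ i, |Y i j| := Finset.sum_add_distrib
      _ ≤ norm1 X + norm1 Y := add_le_add (col_sum_le_norm1 X j) (col_sum_le_norm1 Y j)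

lemma norm1_mul_le {ι κ μ : Type*} [Fintype ι] [Fintype κ] [Fintype μ]
    (X : Matrix ι κ ℝ) (Y : Matrix κ μ ℝ) :
    norm1 (X * Y) ≤ norm1 X * norm1 Y := by
  apply norm1_le
  · exact mul_nonneg (norm1_nonneg X) (norm1_nonneg Y)
  · intro j
    calc ∑ i, |(X * Y) i j|
        ≤ ∑ i, ∑ l, |X i l| * |Y l j| := by
          apply Finset.sum_le_sum
          intro i _
          calc |(X * Y) i j| = |∑ l, X i l * Y l j| := by rw [Matrix.mul_apply]
            _ ≤ ∑ l, |X i l * Y l j| := Finset.abs_sum_le_sum_abs _ _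
            _ = ∑ l, |X i l| * |Y l j| := by simp [abs_mul]
      _ = ∑ l, (∑ i, |X i l|) * |Y l j| := by
          rw [Finset.sum_comm]; simp [Finset.sum_mul]
      _ ≤ ∑ l, norm1 X * |Y l j| := by
          apply Finset.sum_le_sum
          intro l _
          exact mul_le_mul_of_nonneg_right (col_sum_le_norm1 X l) (abs_nonneg _)
      _ = norm1 X * ∑ l, |Y l j| := by rw [Finset.mul_sum]
      _ ≤ norm1 X * norm1 Y :=
          mul_le_mul_of_nonneg_left (col_sum_le_norm1 Y j) (norm1_nonneg X)

/-- If the Sum criterion holds at step `k`, then for each column `j > k` the sum of tile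
norms after the Schur update is bounded by the previous sum plus `α ‖A_{k,j}‖₁`. -/
theorem sum_criterion_one_step
    {n nb : ℕ} (A : Fin n → Fin n → Matrix (Fin nb) (Fin nb) ℝ)
    (k : Fin n) (α : ℝ) (hα : 0 < α)
    (hinv : IsUnit (A k k))
    (hcrit : ∑ i ∈ Finset.univ.filter (fun i => k < i), norm1 (A i k)
      ≤ α * (norm1 ((A k k)⁻¹))⁻¹) :
    ∀ j, k < j →
      ∑ i ∈ Finset.univ.filter (fun i => k < i),
          norm1 (A i j - A i k * (A k k)⁻¹ * A k j)
        ≤ (∑ i ∈ Finset.univ.filter (fun i => k < i), norm1 (A i j))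
            + α * norm1 (A k j) := by
  intro j _
  set s := Finset.univ.filter (fun i : Fin n => k < i)
  set c := norm1 ((A k k)⁻¹) with hc
  set m := norm1 (A k j) with hm
  have hc0 : 0 ≤ c := norm1_nonneg _
  have hm0 : 0 ≤ m := norm1_nonneg _
  have step : ∀ i ∈ s, norm1 (A i j - A i k * (A k k)⁻¹ * A k j)
      ≤ norm1 (A i j) + norm1 (A i k) * (c * m) := by
    intro i _
    have h1 : norm1 (A i k * (A k k)⁻¹ * A k j) ≤ norm1 (A i k) * (c * m) := by
      calc norm1 (A i k * (A k k)⁻¹ * A k j)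
          ≤ norm1 (A i k * (A k k)⁻¹) * m := norm1_mul_le _ _
        _ ≤ norm1 (A i k) * c * m :=
            mul_le_mul_of_nonneg_right (norm1_mul_le _ _) hm0
        _ = norm1 (A i k) * (c * m) := by ring
    calc norm1 (A i j - A i k * (A k k)⁻¹ * A k j)
        ≤ norm1 (A i j) + norm1 (A i k * (A k k)⁻¹ * A k j) := norm1_sub_le _ _
      _ ≤ norm1 (A i j) + norm1 (A i k) * (c * m) := by linarith
  calc ∑ i ∈ s, norm1 (A i j - A i k * (A k k)⁻¹ * A k j)
      ≤ ∑ i ∈ s, (norm1 (A i j) + norm1 (A i k) * (c * m)) := Finset.sum_le_sum step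
    _ = (∑ i ∈ s, norm1 (A i j)) + (∑ i ∈ s, norm1 (A i k)) * (c * m) := by
        rw [Finset.sum_add_distrib, Finset.sum_mul]
    _ ≤ (∑ i ∈ s, norm1 (A i j)) + α * m := by
        have h2 : (∑ i ∈ s, norm1 (A i k)) * (c * m) ≤ α * c⁻¹ * (c * m) :=
          mul_le_mul_of_nonneg_right hcrit (mul_nonneg hc0 hm0)
        have h3 : α * c⁻¹ * (c * m) = α * (c⁻¹ * c) * m := by ring
        have h4 : c⁻¹ * c ≤ 1 := by
          rcases eq_or_lt_of_le hc0 with h | h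
          · simp [← h]
          · simp [inv_mul_cancel₀ (ne_of_gt h)]
        have h5 : α * (c⁻¹ * c) * m ≤ α * 1 * m := by
          apply mul_le_mul_of_nonneg_right _ hm0
          exact mul_le_mul_of_nonneg_left h4 (le_of_lt hα)
        nlinarith
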